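/- Let G be a subgroup of U(d) with G = G'' (a gauge group). Then the unital ℂ-subalgebra generated by Q(G) = {V^{⊗n} : V ∈ G} equals the intersection of the unital ℂ-subalgebra generated by G^{×n} with the commutant of the permutation operators {P(σ) : σ a permutation of Fin n}; that is, Alg(Q(G)) is exactly the permutationally invariant subalgebra of Alg(G^{×n}). -/

import Mathlib

/- For a gauge group G (G = G''), the unital ℂ-subalgebra generated by
Q(G) = {V^{⊗n} : V ∈ G} equals the intersection of the unital ℂ-subalgebra
generated by G^{×n} with the commutant of the permutation operators. -/

open Matrix

noncomputable section

/-- Matrices on the n-fold tensor power (ℂ^d)^{⊗n}. -/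
abbrev MatN (d n : ℕ) := Matrix (Fin n → Fin d) (Fin n → Fin d) ℂ

/-- The n-fold tensor power V^{⊗n} of a matrix V on ℂ^d. -/
def tpow (d n : ℕ) (V : Matrix (Fin d) (Fin d) ℂ) : MatN d n :=
  Matrix.of fun x y => ∏ i, V (x i) (y i)

/-- The tensor product V₁ ⊗ ⋯ ⊗ Vₙ of n matrices on ℂ^d. -/
def tensProd (d n : ℕ) (V : Fin n → Matrix (Fin d) (Fin d) ℂ) : MatN d n :=
  Matrix.of fun x y => ∏ i, V i (x i) (y i)

/-- The permutation operator P(σ) on (ℂ^d)^{⊗n}. -/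
def permMat (d n : ℕ) (σ : Equiv.Perm (Fin n)) : MatN d n :=
  Matrix.of fun x y => if x = y ∘ ⇑σ⁻¹ then 1 else 0

/-- Q(G) : the collective action {V^{⊗n} : V ∈ G}. -/
def Qset (d n : ℕ) (G : Subgroup (Matrix.unitaryGroup (Fin d) ℂ)) : Set (MatN d n) :=
  {M | ∃ V ∈ G, M = tpow d n ((V : Matrix.unitaryGroup (Fin d) ℂ) : Matrix (Fin d) (Fin d) ℂ)}

/-- G^{×n} : the set of tensor products V₁ ⊗ ⋯ ⊗ Vₙ with each Vᵢ ∈ G. -/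
def groupTensorSet (d n : ℕ) (G : Subgroup (Matrix.unitaryGroup (Fin d) ℂ)) :
    Set (MatN d n) :=
  {W | ∃ V : Fin n → G,
    W = tensProd d n fun i => ((V i : Matrix.unitaryGroup (Fin d) ℂ) : Matrix (Fin d) (Fin d) ℂ)}

namespace GaugeAux

abbrev Md (d : ℕ) := Matrix (Fin d) (Fin d) ℂ

variable {d n : ℕ}

lemma tensProd_mul (V W : Fin n → Md d) :
    tensProd d n V * tensProd d n W = tensProd d n (fun i => V i * W i) := by
  ext x y
  simp only [tensProd, Matrix.mul_apply, Matrix.of_apply]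
  rw [Fintype.prod_sum (f := fun i j => V i (x i) j * W i j (y i))]
  exact Finset.sum_congr rfl fun z _ => (Finset.prod_mul_distrib).symm

lemma tensProd_one : tensProd d n (fun _ => (1 : Md d)) = 1 := by
  ext x y
  simp only [tensProd, Matrix.of_apply, Matrix.one_apply]
  by_cases h : x = y
  · subst h; simp
  · obtain ⟨i, hi⟩ : ∃ i, x i ≠ y i := by
      by_contra hc
      push_neg at hc
      exact h (funext hc)
    rw [if_neg h]
    exact Finset.prod_eq_zero (Finset.mem_univ i) (by simp [hi])

lemma tpow_eq (V : Md d) : tpow d n V = tensProd d n (fun _ => V) := rfl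

lemma tpow_mul (V W : Md d) : tpow d n V * tpow d n W = tpow d n (V * W) := by
  rw [tpow_eq, tpow_eq, tensProd_mul]; rfl

lemma permMat_mul_apply (σ : Equiv.Perm (Fin n)) (X : MatN d n) (x y : Fin n → Fin d) :
    (permMat d n σ * X) x y = X (x ∘ σ) y := by
  rw [Matrix.mul_apply]
  have hz : ∀ z : Fin n → Fin d, (x = z ∘ ⇑σ⁻¹) ↔ (z = x ∘ ⇑σ) := by
    intro z
    constructor
    · rintro rfl; funext i; simp
    · rintro rfl; funext i; simp
  simp only [permMat, Matrix.of_apply]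
  rw [Finset.sum_congr rfl (fun z _ => by rw [if_congr (hz z) rfl rfl])]
  simp

lemma mul_permMat_apply (σ : Equiv.Perm (Fin n)) (X : MatN d n) (x y : Fin n → Fin d) :
    (X * permMat d n σ) x y = X x (y ∘ ⇑σ⁻¹) := by
  rw [Matrix.mul_apply]
  simp only [permMat, Matrix.of_apply]
  simp

lemma permMat_comm_tensProd_invariant (X : MatN d n)
    (hX : ∀ σ : Equiv.Perm (Fin n), permMat d n σ * X = X * permMat d n σ)
    (σ : Equiv.Perm (Fin n)) (x y : Fin n → Fin d) :
    X (x ∘ ⇑σ) (y ∘ ⇑σ) = X x y := by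
  have := congrFun (congrFun (hX σ) x) (y ∘ ⇑σ)
  rw [permMat_mul_apply, mul_permMat_apply] at this
  have h2 : (y ∘ ⇑σ) ∘ ⇑σ⁻¹ = y := by funext i; simp
  rw [h2] at this
  exact this

lemma tpow_comm_permMat (V : Md d) (σ : Equiv.Perm (Fin n)) :
    permMat d n σ * tpow d n V = tpow d n V * permMat d n σ := by
  ext x y
  rw [permMat_mul_apply, mul_permMat_apply]
  simp only [tpow, Matrix.of_apply, Function.comp_apply]
  calc ∏ i, V (x (σ i)) (y i)
      = ∏ i, V (x (σ i)) (y (σ⁻¹ (σ i))) := by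
        refine Finset.prod_congr rfl fun i _ => by simp
    _ = ∏ i, V (x i) (y (σ⁻¹ i)) := Equiv.prod_comp σ (fun j => V (x j) (y (σ⁻¹ j)))

end GaugeAux

namespace GaugeAux

attribute [local instance] Matrix.linftyOpNormedAddCommGroup Matrix.linftyOpNormedSpace
  Matrix.linftyOpNormedRing Matrix.linftyOpNormedAlgebra

open NormedSpace

variable {d n : ℕ}

/-- embedding of a matrix into slot `j`. -/
def emb (j : Fin n) (a : Md d) : MatN d n :=
  tensProd d n (Function.update (fun _ => (1 : Md d)) j a)

lemma emb_mul (j : Fin n) (a b : Md d) : emb j a * emb j b = emb j (a * b) := by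
  rw [emb, emb, emb, tensProd_mul]
  refine congrArg (tensProd d n) ?_
  funext i
  by_cases h : i = j
  · subst h; simp
  · simp [Function.update_of_ne h]

lemma emb_one (j : Fin n) : emb j (1 : Md d) = 1 := by
  rw [emb]
  rw [show Function.update (fun _ => (1 : Md d)) j 1 = fun _ => (1 : Md d) by simp]
  exact tensProd_one

lemma emb_apply (j : Fin n) (a : Md d) (x y : Fin n → Fin d) :
    emb j a x y = a (x j) (y j) * ∏ i ∈ Finset.univ.erase j, (1 : Md d) (x i) (y i) := by
  rw [emb, tensProd]
  simp only [Matrix.of_apply]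
  rw [← Finset.mul_prod_erase Finset.univ _ (Finset.mem_univ j)]
  simp only [Function.update_self]
  congr 1
  exact Finset.prod_congr rfl fun i hi => by
    rw [Function.update_of_ne (Finset.ne_of_mem_erase hi)]

lemma emb_add (j : Fin n) (a b : Md d) : emb j (a + b) = emb j a + emb j b := by
  ext x y
  simp [emb_apply, Matrix.add_apply, add_mul]

lemma emb_smul (j : Fin n) (c : ℂ) (a : Md d) : emb j (c • a) = c • emb j a := by
  ext x y
  simp only [emb_apply, Matrix.smul_apply, smul_eq_mul]
  ring

lemma emb_commute (j k : Fin n) (hjk : j ≠ k) (a b : Md d) :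
    Commute (emb j a) (emb k b) := by
  unfold Commute SemiconjBy
  rw [emb, emb, tensProd_mul, tensProd_mul]
  refine congrArg (tensProd d n) ?_
  funext i
  rcases eq_or_ne i j with rfl | hij
  · simp [Function.update_of_ne hjk]
  · rcases eq_or_ne i k with rfl | hik
    · simp [Function.update_of_ne hij]
    · simp [Function.update_of_ne hij, Function.update_of_ne hik]

/-- `emb j` as an algebra hom. -/
def embAlg (j : Fin n) : Md d →ₐ[ℂ] MatN d n where
  toFun := emb j
  map_one' := emb_one j
  map_mul' a b := (emb_mul j a b).symm
  map_zero' := by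
    show emb j 0 = 0
    simpa using emb_smul j 0 0
  map_add' := emb_add j
  commutes' c := by
    show emb j (algebraMap ℂ (Md d) c) = algebraMap ℂ (MatN d n) c
    rw [Algebra.algebraMap_eq_smul_one, Algebra.algebraMap_eq_smul_one, emb_smul, emb_one]

/-- the "collective observable" `∑ j, 1 ⊗ ⋯ ⊗ a ⊗ ⋯ ⊗ 1`. -/
def Hop (d n : ℕ) (a : Md d) : MatN d n := ∑ j, emb j a

lemma Hop_add (a b : Md d) : Hop d n (a + b) = Hop d n a + Hop d n b := by
  simp [Hop, emb_add, Finset.sum_add_distrib]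

lemma Hop_smul (c : ℂ) (a : Md d) : Hop d n (c • a) = c • Hop d n a := by
  simp [Hop, emb_smul, Finset.smul_sum]

lemma exp_emb (j : Fin n) (a : Md d) : exp (emb j a) = emb j (exp a) := by
  have hcont : Continuous (embAlg (d := d) (n := n) j) := by
    have hlin : IsLinearMap ℂ (emb (d := d) (n := n) j) :=
      ⟨emb_add j, fun c x => emb_smul j c x⟩
    have : Continuous (emb (d := d) (n := n) j) :=
      LinearMap.continuous_of_finiteDimensional (IsLinearMap.mk' _ hlin)
    exact this
  exact (map_exp (embAlg j) hcont a).symm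

lemma exp_sum_emb (a : Md d) (s : Finset (Fin n)) :
    exp (∑ j ∈ s, emb j a) = tensProd d n (fun i => if i ∈ s then exp a else 1) := by
  classical
  induction s using Finset.induction_on with
  | empty =>
    rw [Finset.sum_empty, exp_zero,
      show (fun i => if i ∈ (∅ : Finset (Fin n)) then exp a else 1) = fun _ => (1 : Md d) by
        funext i; simp]
    exact tensProd_one.symm
  | @insert j s hj ih =>
    have hcomm : Commute (emb j a) (∑ k ∈ s, emb k a) :=
      Commute.sum_right _ _ _ fun k hk => emb_commute j k (fun h => hj (h ▸ hk)) a a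
    rw [Finset.sum_insert hj, Matrix.exp_add_of_commute _ _ hcomm, ih, exp_emb, emb, tensProd_mul]
    refine congrArg (tensProd d n) ?_
    funext i
    by_cases hij : i = j
    · subst hij; simp [hj]
    · rw [Function.update_of_ne hij]
      by_cases his : i ∈ s <;> simp [his, hij, Finset.mem_insert]

lemma exp_Hop (a : Md d) : exp (Hop d n a) = tpow d n (exp a) := by
  rw [Hop, exp_sum_emb, tpow_eq]
  simp

end GaugeAux

namespace GaugeAux

open NormedSpace

variable {d n : ℕ}

/-- Qset without depending on original defs: set of matrices of elements of G. -/
def Gset (d : ℕ) (G : Subgroup (Matrix.unitaryGroup (Fin d) ℂ)) : Set (Md d) :=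
  (fun V : Matrix.unitaryGroup (Fin d) ℂ => (V : Md d)) '' (G : Set _)

/-- the linear span of `G` inside matrices. -/
def Aspan (d : ℕ) (G : Subgroup (Matrix.unitaryGroup (Fin d) ℂ)) : Submodule ℂ (Md d) :=
  Submodule.span ℂ (Gset d G)

variable {G : Subgroup (Matrix.unitaryGroup (Fin d) ℂ)}

lemma one_mem_Gset : (1 : Md d) ∈ Gset d G := ⟨1, G.one_mem, rfl⟩

lemma one_mem_Aspan : (1 : Md d) ∈ Aspan d G := Submodule.subset_span one_mem_Gset

lemma mul_mem_Aspan {a b : Md d} (ha : a ∈ Aspan d G) (hb : b ∈ Aspan d G) :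
    a * b ∈ Aspan d G := by
  induction ha using Submodule.span_induction with
  | mem v hv =>
    induction hb using Submodule.span_induction with
    | mem w hw =>
      obtain ⟨V, hV, rfl⟩ := hv
      obtain ⟨W, hW, rfl⟩ := hw
      exact Submodule.subset_span ⟨V * W, G.mul_mem hV hW, rfl⟩
    | zero => simp
    | add x y _ _ hx hy => rw [mul_add]; exact Submodule.add_mem _ hx hy
    | smul c x _ hx => rw [mul_smul_comm]; exact Submodule.smul_mem _ c hx
  | zero => simp
  | add x y _ _ hx hy => rw [add_mul]; exact Submodule.add_mem _ hx hy
  | smul c x _ hx => rw [smul_mul_assoc]; exact Submodule.smul_mem _ c hx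

lemma star_mem_Aspan {a : Md d} (ha : a ∈ Aspan d G) : star a ∈ Aspan d G := by
  induction ha using Submodule.span_induction with
  | mem v hv =>
    obtain ⟨V, hV, rfl⟩ := hv
    refine Submodule.subset_span ⟨V⁻¹, G.inv_mem hV, ?_⟩
    have : star (V : Md d) = ((V⁻¹ : Matrix.unitaryGroup (Fin d) ℂ) : Md d) := by
      simp [Matrix.UnitaryGroup.inv_apply]
    rw [this]
  | zero => simp
  | add x y _ _ hx hy => rw [star_add]; exact Submodule.add_mem _ hx hy
  | smul c x _ hx => rw [star_smul]; exact Submodule.smul_mem _ _ hx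

lemma pow_mem_Aspan {a : Md d} (ha : a ∈ Aspan d G) (k : ℕ) : a ^ k ∈ Aspan d G := by
  induction k with
  | zero => simpa using one_mem_Aspan
  | succ k ih => rw [pow_succ]; exact mul_mem_Aspan ih ha

/-- the span of the collective operators. -/
def spanQ (d n : ℕ) (G : Subgroup (Matrix.unitaryGroup (Fin d) ℂ)) : Submodule ℂ (MatN d n) :=
  Submodule.span ℂ (Qset d n G)

lemma tpow_mem_spanQ {V : Matrix.unitaryGroup (Fin d) ℂ} (hV : V ∈ G) :
    tpow d n (V : Md d) ∈ spanQ d n G :=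
  Submodule.subset_span ⟨V, hV, rfl⟩

lemma one_mem_spanQ : (1 : MatN d n) ∈ spanQ d n G := by
  have := tpow_mem_spanQ (d := d) (n := n) (G.one_mem)
  have h1 : ((1 : Matrix.unitaryGroup (Fin d) ℂ) : Md d) = 1 := rfl
  rw [h1] at this
  rwa [tpow_eq, tensProd_one] at this

lemma mul_mem_spanQ {X Y : MatN d n} (hX : X ∈ spanQ d n G) (hY : Y ∈ spanQ d n G) :
    X * Y ∈ spanQ d n G := by
  induction hX using Submodule.span_induction with
  | mem v hv =>
    induction hY using Submodule.span_induction with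
    | mem w hw =>
      obtain ⟨V, hV, rfl⟩ := hv
      obtain ⟨W, hW, rfl⟩ := hw
      rw [tpow_mul]
      have : ((V : Md d) * (W : Md d)) = ((V * W : Matrix.unitaryGroup (Fin d) ℂ) : Md d) := rfl
      rw [this]
      exact tpow_mem_spanQ (G.mul_mem hV hW)
    | zero => simp
    | add x y _ _ hx hy => rw [mul_add]; exact Submodule.add_mem _ hx hy
    | smul c x _ hx => rw [mul_smul_comm]; exact Submodule.smul_mem _ c hx
  | zero => simp
  | add x y _ _ hx hy => rw [add_mul]; exact Submodule.add_mem _ hx hy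
  | smul c x _ hx => rw [smul_mul_assoc]; exact Submodule.smul_mem _ c hx

end GaugeAux

namespace GaugeAux

attribute [local instance] Matrix.linftyOpNormedAddCommGroup Matrix.linftyOpNormedSpace
  Matrix.linftyOpNormedRing Matrix.linftyOpNormedAlgebra

open NormedSpace

variable {d n : ℕ} {G : Subgroup (Matrix.unitaryGroup (Fin d) ℂ)}

lemma exp_mem_Aspan {x : Md d} (hx : x ∈ Aspan d G) : exp x ∈ Aspan d G := by
  have hclosed : IsClosed ((Aspan d G : Submodule ℂ (Md d)) : Set (Md d)) :=
    Submodule.closed_of_finiteDimensional _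
  have hsum := NormedSpace.exp_series_hasSum_exp' (𝕂 := ℂ) x
  refine hclosed.mem_of_tendsto hsum.tendsto_sum_nat (Filter.Eventually.of_forall fun N => ?_)
  exact Submodule.sum_mem _ fun k _ => Submodule.smul_mem _ _ (pow_mem_Aspan hx k)

lemma commute_of_centralizer {W : Matrix.unitaryGroup (Fin d) ℂ}
    (hW : W ∈ Subgroup.centralizer (G : Set (Matrix.unitaryGroup (Fin d) ℂ)))
    {a : Md d} (ha : a ∈ Aspan d G) :
    Commute (W : Md d) a := by
  induction ha using Submodule.span_induction with
  | mem v hv =>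
    obtain ⟨V, hV, rfl⟩ := hv
    have h1 := (Subgroup.mem_centralizer_iff.mp hW) V hV
    have h2 : (V : Md d) * (W : Md d) = (W : Md d) * (V : Md d) := by
      have := congrArg (Subtype.val) h1
      simpa using this
    exact h2.symm
  | zero => exact Commute.zero_right _
  | add x y _ _ hx hy => exact hx.add_right hy
  | smul c x _ hx => exact hx.smul_right c

lemma exp_skew_mem_G
    (hGauge : Subgroup.centralizer ((Subgroup.centralizer (G : Set _)
        : Subgroup (Matrix.unitaryGroup (Fin d) ℂ)) : Set _) = G)
    {x : Md d} (hx : x ∈ Aspan d G) (hskew : star x = -x) :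
    ∃ U : Matrix.unitaryGroup (Fin d) ℂ, U ∈ G ∧ (U : Md d) = exp x := by
  have hinv : exp x * exp (-x) = 1 := by
    rw [← Matrix.exp_add_of_commute _ _ (Commute.neg_right (Commute.refl x)), add_neg_cancel, exp_zero]
  have hunit : exp x ∈ Matrix.unitaryGroup (Fin d) ℂ := by
    rw [Matrix.mem_unitaryGroup_iff, star_exp, hskew]
    exact hinv
  set U : Matrix.unitaryGroup (Fin d) ℂ := ⟨exp x, hunit⟩ with hU
  have hUc : U ∈ Subgroup.centralizer ((Subgroup.centralizer (G : Set _)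
      : Subgroup (Matrix.unitaryGroup (Fin d) ℂ)) : Set _) := by
    rw [Subgroup.mem_centralizer_iff]
    intro W hW
    have h1 : Commute ((W : Matrix.unitaryGroup (Fin d) ℂ) : Md d) x :=
      commute_of_centralizer hW hx
    have h2 := h1.exp_right
    refine Subtype.ext ?_
    exact h2.eq
  exact ⟨U, hGauge ▸ hUc, rfl⟩

lemma Hop_hermitian_mem_spanQ
    (hGauge : Subgroup.centralizer ((Subgroup.centralizer (G : Set _)
        : Subgroup (Matrix.unitaryGroup (Fin d) ℂ)) : Set _) = G)
    {h : Md d} (hh : h ∈ Aspan d G) (hherm : star h = h) :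
    Hop d n h ∈ spanQ d n G := by
  set B : MatN d n := Complex.I • Hop d n h with hB
  have hmem : ∀ t : ℝ, exp (t • B) ∈ spanQ d n G := by
    intro t
    have hx : (((t : ℂ) * Complex.I) • h) ∈ Aspan d G := Submodule.smul_mem _ _ hh
    have hskew : star (((t : ℂ) * Complex.I) • h) = -(((t : ℂ) * Complex.I) • h) := by
      rw [star_smul, hherm, ← neg_smul]
      congr 1
      simp [Complex.ext_iff]
    obtain ⟨U, hUG, hUval⟩ := exp_skew_mem_G hGauge hx hskew
    have hkey : exp (t • B) = tpow d n (U : Md d) := by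
      rw [hUval, ← exp_Hop]
      congr 1
      rw [Hop_smul, hB, ← algebraMap_smul ℂ t (Complex.I • Hop d n h), smul_smul,
        Complex.coe_algebraMap]
    rw [hkey]
    exact tpow_mem_spanQ hUG
  have hclosed : IsClosed ((spanQ d n G : Submodule ℂ (MatN d n)) : Set (MatN d n)) :=
    Submodule.closed_of_finiteDimensional _
  have hderiv : HasDerivAt (fun t : ℝ => exp (t • B)) B 0 := by
    have hd := hasDerivAt_exp_smul_const (𝕂 := ℝ) (𝔸 := MatN d n) B 0
    rw [zero_smul, exp_zero, one_mul] at hd; exact hd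
  have hBmem : B ∈ spanQ d n G := by
    replace hderiv := hasDerivAt_iff_tendsto_slope.mp hderiv
    refine hclosed.mem_of_tendsto hderiv ?_
    refine Filter.eventually_of_mem self_mem_nhdsWithin fun t ht => ?_
    have h0 : exp ((0 : ℝ) • B) = 1 := by simp [exp_zero]
    show slope (fun t : ℝ => exp (t • B)) 0 t ∈ spanQ d n G
    rw [slope_def_module]
    refine Submodule.smul_of_tower_mem _ _ (Submodule.sub_mem _ (hmem t) ?_)
    rw [h0]
    exact one_mem_spanQ
  have hfinal : Hop d n h = (-Complex.I) • B := by
    rw [hB, smul_smul]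
    simp
  rw [hfinal]
  exact Submodule.smul_mem _ _ hBmem

end GaugeAux

namespace GaugeAux

open NormedSpace

variable {d n : ℕ} {G : Subgroup (Matrix.unitaryGroup (Fin d) ℂ)}

lemma Hop_mem_spanQ
    (hGauge : Subgroup.centralizer ((Subgroup.centralizer (G : Set _)
        : Subgroup (Matrix.unitaryGroup (Fin d) ℂ)) : Set _) = G)
    {a : Md d} (ha : a ∈ Aspan d G) : Hop d n a ∈ spanQ d n G := by
  have hsa : star a ∈ Aspan d G := star_mem_Aspan ha
  have h1herm : star ((2⁻¹ : ℂ) • (a + star a)) = (2⁻¹ : ℂ) • (a + star a) := by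
    rw [star_smul, star_add, star_star]
    rw [show star ((2⁻¹ : ℂ)) = (2⁻¹ : ℂ) by simp, add_comm]
  have h2herm : star ((-(Complex.I) * 2⁻¹) • (a - star a))
      = (-(Complex.I) * 2⁻¹) • (a - star a) := by
    rw [star_smul, star_sub, star_star]
    rw [show star (-(Complex.I) * 2⁻¹) = Complex.I * 2⁻¹ by simp,
      show star a - a = -(a - star a) by rw [neg_sub], smul_neg, ← neg_smul, neg_mul]
  have m1 : Hop d n ((2⁻¹ : ℂ) • (a + star a)) ∈ spanQ d n G :=
    Hop_hermitian_mem_spanQ hGauge (Submodule.smul_mem _ _ (Submodule.add_mem _ ha hsa)) h1herm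
  have m2 : Hop d n ((-(Complex.I) * 2⁻¹) • (a - star a)) ∈ spanQ d n G :=
    Hop_hermitian_mem_spanQ hGauge (Submodule.smul_mem _ _ (Submodule.sub_mem _ ha hsa)) h2herm
  have hdecomp : Hop d n a = Hop d n ((2⁻¹ : ℂ) • (a + star a))
      + Complex.I • Hop d n ((-(Complex.I) * 2⁻¹) • (a - star a)) := by
    rw [← Hop_smul, ← Hop_add]
    congr 1
    have hI : Complex.I • ((-(Complex.I) * 2⁻¹) • (a - star a)) = (2⁻¹ : ℂ) • (a - star a) := by
      rw [smul_smul]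
      congr 1
      rw [show Complex.I * (-Complex.I * 2⁻¹) = -(Complex.I * Complex.I) * 2⁻¹ by ring,
        Complex.I_mul_I]
      norm_num
    rw [hI, ← smul_add, show (a + star a) + (a - star a) = a + a by abel,
      show a + a = (2 : ℂ) • a by rw [two_smul], smul_smul]
    norm_num
  rw [hdecomp]
  exact Submodule.add_mem _ m1 (Submodule.smul_mem _ _ m2)

end GaugeAux

namespace GaugeAux

open Function

variable {d n : ℕ} {G : Subgroup (Matrix.unitaryGroup (Fin d) ℂ)}

/-- place matrices `b` at the (distinct) slots `c`. -/
def Tmat (d n : ℕ) {m : ℕ} (c : Fin m → Fin n) (b : Fin m → Md d) : MatN d n :=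
  tensProd d n (Function.extend c b (fun _ => (1 : Md d)))

lemma snoc_injective {m : ℕ} {c : Fin m → Fin n} {j : Fin n} (hc : Function.Injective c)
    (hj : ∀ i, c i ≠ j) : Function.Injective (Fin.snoc c j : Fin (m + 1) → Fin n) := by
  intro u v huv
  induction u using Fin.lastCases with
  | last =>
    induction v using Fin.lastCases with
    | last => rfl
    | cast v =>
      rw [Fin.snoc_last, Fin.snoc_castSucc] at huv
      exact absurd huv.symm (hj v)
  | cast u =>
    induction v using Fin.lastCases with
    | last =>
      rw [Fin.snoc_last, Fin.snoc_castSucc] at huv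
      exact absurd huv (hj u)
    | cast v =>
      rw [Fin.snoc_castSucc, Fin.snoc_castSucc] at huv
      exact congrArg Fin.castSucc (hc huv)

lemma Tmat_mul_emb_mem {m : ℕ} {c : Fin m → Fin n} (hc : Function.Injective c)
    (b : Fin m → Md d) (i : Fin m) (a : Md d) :
    Tmat d n c b * emb (c i) a = Tmat d n c (Function.update b i (b i * a)) := by
  rw [Tmat, Tmat, emb, tensProd_mul]
  refine congrArg (tensProd d n) ?_
  funext p
  by_cases hp : ∃ i', c i' = p
  · obtain ⟨i', rfl⟩ := hp
    rw [hc.extend_apply, hc.extend_apply]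
    rcases eq_or_ne i' i with rfl | hii
    · rw [Function.update_self, Function.update_self]
    · rw [Function.update_of_ne hii, Function.update_of_ne (fun h => hii (hc h)), mul_one]
  · rw [Function.extend_apply' _ _ _ hp, Function.extend_apply' _ _ _ hp,
      Function.update_of_ne (fun h => hp ⟨i, h.symm⟩), one_mul]

lemma Tmat_mul_emb_notmem {m : ℕ} {c : Fin m → Fin n} (hc : Function.Injective c)
    (b : Fin m → Md d) {j : Fin n} (hj : ∀ i, c i ≠ j) (a : Md d) :
    Tmat d n c b * emb j a = Tmat d n (Fin.snoc c j) (Fin.snoc b a) := by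
  have hsnoc := snoc_injective hc hj
  rw [Tmat, Tmat, emb, tensProd_mul]
  refine congrArg (tensProd d n) ?_
  funext p
  rcases eq_or_ne p j with rfl | hpj
  · rw [Function.extend_apply' _ _ _ (fun ⟨i, h⟩ => hj i h), one_mul, Function.update_self]
    have h1 := hsnoc.extend_apply (Fin.snoc b a) (fun _ => (1 : Md d)) (Fin.last m)
    rw [Fin.snoc_last, Fin.snoc_last] at h1
    exact h1.symm
  · rw [Function.update_of_ne hpj, mul_one]
    by_cases hp : ∃ i', c i' = p
    · obtain ⟨i', rfl⟩ := hp
      have h1 := hsnoc.extend_apply (Fin.snoc b a) (fun _ => (1 : Md d)) (Fin.castSucc i')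
      rw [Fin.snoc_castSucc, Fin.snoc_castSucc] at h1
      rw [hc.extend_apply, h1]
    · rw [Function.extend_apply' _ _ _ hp, Function.extend_apply' _ _ _ ?_]
      rintro ⟨i', hi'⟩
      induction i' using Fin.lastCases with
      | last => rw [Fin.snoc_last] at hi'; exact hpj hi'.symm
      | cast i'' => rw [Fin.snoc_castSucc] at hi'; exact hp ⟨i'', hi'⟩

end GaugeAux

namespace GaugeAux

open Function Finset

variable {d n : ℕ} {G : Subgroup (Matrix.unitaryGroup (Fin d) ℂ)}

/-- the symmetrized sum of placements. -/
def Ssum (d n : ℕ) (m : ℕ) (b : Fin m → Md d) : MatN d n :=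
  ∑ c ∈ Finset.univ.filter (fun c : Fin m → Fin n => Function.Injective c), Tmat d n c b

lemma Ssum_zero (b : Fin 0 → Md d) : Ssum d n 0 b = 1 := by
  classical
  have huniq : ∀ c : Fin 0 → Fin n, Function.Injective c := fun c u => isEmptyElim u
  rw [Ssum, Finset.filter_true_of_mem (fun c _ => huniq c)]
  rw [Finset.univ_unique, Finset.sum_singleton]
  rw [Tmat, show Function.extend (default : Fin 0 → Fin n) b (fun _ => (1 : Md d))
      = fun _ => (1 : Md d) from funext fun p =>
        Function.extend_apply' _ _ _ (fun ⟨i, _⟩ => isEmptyElim i)]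
  exact tensProd_one

lemma Ssum_succ (m : ℕ) (b : Fin (m + 1) → Md d) :
    Ssum d n (m + 1) b
      = Ssum d n m (Fin.init b) * Hop d n (b (Fin.last m))
        - ∑ i : Fin m, Ssum d n m (Function.update (Fin.init b) i
            (Fin.init b i * b (Fin.last m))) := by
  classical
  set a := b (Fin.last m) with ha
  set b' := Fin.init b with hb'
  set F : Finset (Fin m → Fin n) :=
    Finset.univ.filter (fun c : Fin m → Fin n => Function.Injective c) with hF
  set Fc : (Fin m → Fin n) → Finset (Fin n) :=
    fun c => Finset.univ.filter (fun j => ∀ i, c i ≠ j) with hFc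
  rw [eq_sub_iff_add_eq]
  have hsplit : ∀ c ∈ F, Tmat d n c b' * Hop d n a
      = (∑ j ∈ Fc c, Tmat d n (Fin.snoc c j) (Fin.snoc b' a))
        + ∑ i : Fin m, Tmat d n c (Function.update b' i (b' i * a)) := by
    intro c hc
    have hcinj : Function.Injective c := (Finset.mem_filter.mp hc).2
    rw [Hop, Finset.mul_sum]
    rw [← Finset.sum_filter_add_sum_filter_not Finset.univ (fun j => ∀ i, c i ≠ j)
      (fun j => Tmat d n c b' * emb j a)]
    congr 1
    · exact Finset.sum_congr rfl fun j hj =>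
        Tmat_mul_emb_notmem hcinj b' (Finset.mem_filter.mp hj).2 a
    · have hre : ∑ j ∈ Finset.univ.filter (fun j => ¬∀ i, c i ≠ j),
          Tmat d n c b' * emb j a = ∑ i : Fin m, Tmat d n c b' * emb (c i) a := by
        refine (Finset.sum_bij (fun i (_ : i ∈ Finset.univ) => c i) ?_ ?_ ?_ ?_).symm
        · intro i _
          refine Finset.mem_filter.mpr ⟨Finset.mem_univ _, ?_⟩
          push_neg
          exact ⟨i, rfl⟩
        · intro i _ i' _ h
          exact hcinj h
        · intro j hj
          have := (Finset.mem_filter.mp hj).2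
          push_neg at this
          obtain ⟨i, hi⟩ := this
          exact ⟨i, Finset.mem_univ _, hi⟩
        · intro i _
          rfl
      rw [hre]
      exact Finset.sum_congr rfl fun i _ => Tmat_mul_emb_mem hcinj b' i a
  have hbig : Ssum d n m b' * Hop d n a
      = (∑ c ∈ F, ∑ j ∈ Fc c, Tmat d n (Fin.snoc c j) (Fin.snoc b' a))
        + ∑ i : Fin m, ∑ c ∈ F, Tmat d n c (Function.update b' i (b' i * a)) := by
    rw [Ssum, Finset.sum_mul, Finset.sum_congr rfl hsplit, Finset.sum_add_distrib]
    congr 1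
    exact Finset.sum_comm
  have hsnocsum : ∑ c ∈ F, ∑ j ∈ Fc c, Tmat d n (Fin.snoc c j) (Fin.snoc b' a)
      = Ssum d n (m + 1) b := by
    rw [Finset.sum_sigma' F Fc (fun c j => Tmat d n (Fin.snoc c j) (Fin.snoc b' a)), Ssum]
    refine Finset.sum_bij (fun x (_ : x ∈ (F.sigma Fc)) => (Fin.snoc x.1 x.2 : Fin (m+1) → Fin n))
      ?_ ?_ ?_ ?_
    · intro x hx
      rw [Finset.mem_sigma] at hx
      refine Finset.mem_filter.mpr ⟨Finset.mem_univ _,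
        snoc_injective (Finset.mem_filter.mp hx.1).2 fun i => ?_⟩
      exact (Finset.mem_filter.mp hx.2).2 i
    · intro x hx x' hx' h
      have h1 : x.1 = x'.1 := by
        have := congrArg Fin.init h
        rwa [Fin.init_snoc, Fin.init_snoc] at this
      have h2 : x.2 = x'.2 := by
        have := congrFun h (Fin.last m)
        simpa only [Fin.snoc_last] using this
      exact Sigma.ext h1 (heq_of_eq h2)
    · intro c hc
      have hcinj : Function.Injective c := (Finset.mem_filter.mp hc).2
      refine ⟨⟨Fin.init c, c (Fin.last m)⟩, ?_, Fin.snoc_init_self c⟩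
      rw [Finset.mem_sigma]
      constructor
      · refine Finset.mem_filter.mpr ⟨Finset.mem_univ _, fun u v huv => ?_⟩
        have : c (Fin.castSucc u) = c (Fin.castSucc v) := huv
        exact Fin.castSucc_injective _ (hcinj this)
      · refine Finset.mem_filter.mpr ⟨Finset.mem_univ _, fun i hi => ?_⟩
        have : Fin.castSucc i = Fin.last m := hcinj hi
        exact absurd this (Fin.castSucc_lt_last i).ne
    · intro x hx
      rw [ha, hb', Fin.snoc_init_self]
  rw [hbig, hsnocsum]
  congr 1

lemma Ssum_mem_spanQ
    (hGauge : Subgroup.centralizer ((Subgroup.centralizer (G : Set _)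
        : Subgroup (Matrix.unitaryGroup (Fin d) ℂ)) : Set _) = G) :
    ∀ (m : ℕ) (b : Fin m → Md d), (∀ i, b i ∈ Aspan d G) → Ssum d n m b ∈ spanQ d n G := by
  intro m
  induction m with
  | zero => intro b _; rw [Ssum_zero]; exact one_mem_spanQ
  | succ m ih =>
    intro b hb
    rw [Ssum_succ]
    refine Submodule.sub_mem _ ?_ ?_
    · exact mul_mem_spanQ (ih _ fun i => hb _) (Hop_mem_spanQ hGauge (hb _))
    · refine Submodule.sum_mem _ fun i _ => ih _ fun k => ?_
      rcases eq_or_ne k i with rfl | hki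
      · rw [Function.update_self]
        exact mul_mem_Aspan (hb _) (hb _)
      · rw [Function.update_of_ne hki]
        exact hb _
end GaugeAux

namespace GaugeAux

open Function Finset

variable {d n : ℕ} {G : Subgroup (Matrix.unitaryGroup (Fin d) ℂ)}

/-- simultaneous permutation of tensor factors, as a linear map. -/
def permAct (d n : ℕ) (σ : Equiv.Perm (Fin n)) : MatN d n →ₗ[ℂ] MatN d n where
  toFun X := Matrix.of fun x y => X (x ∘ ⇑σ) (y ∘ ⇑σ)
  map_add' X Y := rfl
  map_smul' c X := rfl

lemma permAct_tensProd (σ : Equiv.Perm (Fin n)) (W : Fin n → Md d) :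
    permAct d n σ (tensProd d n W) = tensProd d n (fun i => W (σ⁻¹ i)) := by
  ext x y
  show ∏ i, W i (x (σ i)) (y (σ i)) = ∏ i, W (σ⁻¹ i) (x i) (y i)
  have := Equiv.prod_comp σ (fun j => W (σ⁻¹ j) (x j) (y j))
  rw [← this]
  refine Finset.prod_congr rfl fun i _ => ?_
  simp

lemma extend_perm (σ : Equiv.Perm (Fin n)) (W : Fin n → Md d) :
    Function.extend (⇑σ) W (fun _ => (1 : Md d)) = fun p => W (σ⁻¹ p) := by
  funext p
  have h := σ.injective.extend_apply W (fun _ => (1 : Md d)) (σ⁻¹ p)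
  rwa [show σ (σ⁻¹ p) = p from σ.apply_symm_apply p] at h

lemma Ssum_eq_sum_perm (W : Fin n → Md d) :
    Ssum d n n W = ∑ σ : Equiv.Perm (Fin n), tensProd d n (fun i => W (σ⁻¹ i)) := by
  classical
  rw [Ssum]
  refine (Finset.sum_bij (fun (σ : Equiv.Perm (Fin n)) (_ : σ ∈ Finset.univ) => ⇑σ)
    ?_ ?_ ?_ ?_).symm
  · intro σ _
    exact Finset.mem_filter.mpr ⟨Finset.mem_univ _, σ.injective⟩
  · intro σ _ τ _ h
    exact Equiv.ext fun x => congrFun h x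
  · intro c hc
    have hcinj : Function.Injective c := (Finset.mem_filter.mp hc).2
    have hb : Function.Bijective c := Finite.injective_iff_bijective.mp hcinj
    exact ⟨Equiv.ofBijective c hb, Finset.mem_univ _, rfl⟩
  · intro σ _
    rw [Tmat, extend_perm]

lemma sum_permAct_tensProd (W : Fin n → Md d) :
    ∑ σ : Equiv.Perm (Fin n), permAct d n σ (tensProd d n W) = Ssum d n n W := by
  rw [Ssum_eq_sum_perm]
  exact Finset.sum_congr rfl fun σ _ => permAct_tensProd σ W

/-- span of the product set. -/
def spanGT (d n : ℕ) (G : Subgroup (Matrix.unitaryGroup (Fin d) ℂ)) : Submodule ℂ (MatN d n) :=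
  Submodule.span ℂ (groupTensorSet d n G)

lemma one_mem_groupTensorSet : (1 : MatN d n) ∈ groupTensorSet d n G :=
  ⟨fun _ => (1 : G), by rw [show (fun i : Fin n => (((1 : G) : Matrix.unitaryGroup (Fin d) ℂ)
    : Md d)) = fun _ => (1 : Md d) from rfl, tensProd_one]⟩

lemma mul_mem_spanGT {X Y : MatN d n} (hX : X ∈ spanGT d n G) (hY : Y ∈ spanGT d n G) :
    X * Y ∈ spanGT d n G := by
  induction hX using Submodule.span_induction with
  | mem v hv =>
    induction hY using Submodule.span_induction with
    | mem w hw =>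
      obtain ⟨V, rfl⟩ := hv
      obtain ⟨W, rfl⟩ := hw
      rw [tensProd_mul]
      exact Submodule.subset_span ⟨fun i => V i * W i, rfl⟩
    | zero => simp
    | add x y _ _ hx hy => rw [mul_add]; exact Submodule.add_mem _ hx hy
    | smul c x _ hx => rw [mul_smul_comm]; exact Submodule.smul_mem _ c hx
  | zero => simp
  | add x y _ _ hx hy => rw [add_mul]; exact Submodule.add_mem _ hx hy
  | smul c x _ hx => rw [smul_mul_assoc]; exact Submodule.smul_mem _ c hx

lemma sum_permAct_mem_spanQ
    (hGauge : Subgroup.centralizer ((Subgroup.centralizer (G : Set _)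
        : Subgroup (Matrix.unitaryGroup (Fin d) ℂ)) : Set _) = G)
    {X : MatN d n} (hX : X ∈ spanGT d n G) :
    ∑ σ : Equiv.Perm (Fin n), permAct d n σ X ∈ spanQ d n G := by
  have hFlin : ∀ (Y Z : MatN d n), (∑ σ : Equiv.Perm (Fin n), permAct d n σ (Y + Z))
      = (∑ σ : Equiv.Perm (Fin n), permAct d n σ Y)
        + ∑ σ : Equiv.Perm (Fin n), permAct d n σ Z := by
    intro Y Z
    rw [← Finset.sum_add_distrib]
    exact Finset.sum_congr rfl fun σ _ => map_add _ _ _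
  induction hX using Submodule.span_induction with
  | mem v hv =>
    obtain ⟨V, rfl⟩ := hv
    rw [sum_permAct_tensProd]
    refine Ssum_mem_spanQ hGauge n _ fun i => ?_
    exact Submodule.subset_span ⟨(V i : Matrix.unitaryGroup (Fin d) ℂ), (V i).2, rfl⟩
  | zero => simp
  | add x y _ _ hx hy => rw [hFlin]; exact Submodule.add_mem _ hx hy
  | smul c x _ hx =>
    have : (∑ σ : Equiv.Perm (Fin n), permAct d n σ (c • x))
        = c • ∑ σ : Equiv.Perm (Fin n), permAct d n σ x := by
      rw [Finset.smul_sum]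
      exact Finset.sum_congr rfl fun σ _ => map_smul _ _ _
    rw [this]
    exact Submodule.smul_mem _ c hx

end GaugeAux

open GaugeAux in
theorem collective_algebra_eq_permutation_invariant_part (d n : ℕ) (hd : 1 ≤ d) (hn : 1 ≤ n)
    (G : Subgroup (Matrix.unitaryGroup (Fin d) ℂ))
    (hGauge : Subgroup.centralizer ((Subgroup.centralizer (G : Set _)
        : Subgroup (Matrix.unitaryGroup (Fin d) ℂ)) : Set _) = G) :
    (Algebra.adjoin ℂ (Qset d n G) : Set (MatN d n))
      = (Algebra.adjoin ℂ (groupTensorSet d n G) : Set (MatN d n))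
          ∩ {X : MatN d n | ∀ σ : Equiv.Perm (Fin n),
              permMat d n σ * X = X * permMat d n σ} := by
  classical
  have hQsub : Qset d n G ⊆ groupTensorSet d n G := by
    rintro M ⟨V, hV, rfl⟩
    exact ⟨fun _ => ⟨V, hV⟩, by rw [tpow_eq]⟩
  ext X
  simp only [Set.mem_inter_iff, Set.mem_setOf_eq, SetLike.mem_coe]
  constructor
  · intro hX
    refine ⟨Algebra.adjoin_mono hQsub hX, ?_⟩
    intro σ
    have hle : Algebra.adjoin ℂ (Qset d n G)
        ≤ Subalgebra.centralizer ℂ (Set.range (permMat d n)) := by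
      rw [Algebra.adjoin_le_iff]
      rintro M ⟨V, hV, rfl⟩
      rw [SetLike.mem_coe, Subalgebra.mem_centralizer_iff]
      rintro g ⟨τ, rfl⟩
      exact tpow_comm_permMat _ τ
    exact (Subalgebra.mem_centralizer_iff ℂ).mp (hle hX) (permMat d n σ) ⟨σ, rfl⟩
  · rintro ⟨hmem, hcomm⟩
    have hXspan : X ∈ spanGT d n G := by
      have hle : Algebra.adjoin ℂ (groupTensorSet d n G)
          ≤ Submodule.toSubalgebra (spanGT d n G)
              (Submodule.subset_span one_mem_groupTensorSet)
              (fun x y hx hy => mul_mem_spanGT hx hy) :=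
        Algebra.adjoin_le Submodule.subset_span
      exact hle hmem
    have hinv : ∀ σ : Equiv.Perm (Fin n), permAct d n σ X = X := by
      intro σ
      ext x y
      show X (x ∘ ⇑σ) (y ∘ ⇑σ) = X x y
      exact permMat_comm_tensProd_invariant X hcomm σ x y
    have havg : (∑ σ : Equiv.Perm (Fin n), permAct d n σ X) = (n.factorial : ℂ) • X := by
      rw [Finset.sum_congr rfl fun σ _ => hinv σ, Finset.sum_const, Finset.card_univ,
        Fintype.card_perm, Fintype.card_fin]
      exact (Nat.cast_smul_eq_nsmul ℂ _ _).symm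
    have hXQ : X ∈ spanQ d n G := by
      have hsum := sum_permAct_mem_spanQ hGauge hXspan
      rw [havg] at hsum
      have hne : (n.factorial : ℂ) ≠ 0 := Nat.cast_ne_zero.mpr (Nat.factorial_ne_zero n)
      have hsm := Submodule.smul_mem _ ((n.factorial : ℂ)⁻¹) hsum
      rwa [smul_smul, inv_mul_cancel₀ hne, one_smul] at hsm
    have hle2 : spanQ d n G ≤ Subalgebra.toSubmodule (Algebra.adjoin ℂ (Qset d n G)) :=
      Submodule.span_le.mpr Algebra.subset_adjoin
    exact hle2 hXQ
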